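/- For every integer k ≥ 0, the tree L(k) satisfies lmw(L(k)) = k. -/

import Mathlib

open scoped Classical

noncomputable section

namespace LMW

variable {V : Type*} [Fintype V]

/-- The bipartite graph `G[Vᵢ, V̄ᵢ]` consisting of the edges of `G` crossing the cut at
position `i` of the linear layout `σ` (here `Vᵢ` is the set of the first `i` vertices
in the layout). -/
def cutGraph (G : SimpleGraph V) (σ : V ≃ Fin (Fintype.card V)) (i : ℕ) : SimpleGraph V where
  Adj u v := G.Adj u v ∧
    (((σ u : ℕ) < i ∧ i ≤ (σ v : ℕ)) ∨ ((σ v : ℕ) < i ∧ i ≤ (σ u : ℕ)))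
  symm := by
    constructor
    intro u v h
    exact ⟨h.1.symm, h.2.symm⟩
  loopless := by
    constructor
    intro u h
    exact G.irrefl h.1

/-- `M` is an induced matching in `H`: a set of edges of `H` such that any two distinct
edges of `M` share no endpoint and no endpoint of one is adjacent in `H` to an endpoint
of the other. -/
def IsInducedMatching (H : SimpleGraph V) (M : Finset (Sym2 V)) : Prop :=
  (↑M : Set (Sym2 V)) ⊆ H.edgeSet ∧
    ∀ e ∈ M, ∀ f ∈ M, e ≠ f → ∀ u ∈ e, ∀ v ∈ f, u ≠ v ∧ ¬ H.Adj u v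

/-- `mim H` is the size of a maximum induced matching of `H`. -/
def mim (H : SimpleGraph V) : ℕ :=
  sSup {n : ℕ | ∃ M : Finset (Sym2 V), IsInducedMatching H M ∧ M.card = n}

/-- The MIM-width of `G` under the linear layout `σ`: the maximum over all cuts
`1 ≤ i < |V|` of the size of a maximum induced matching of the cut graph. -/
def mw (G : SimpleGraph V) (σ : V ≃ Fin (Fintype.card V)) : ℕ :=
  (Finset.Ico 1 (Fintype.card V)).sup fun i => mim (cutGraph G σ i)

/-- The linear MIM-width of `G`: the minimum of `mw G σ` over all linear layouts `σ`. -/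
def lmw (G : SimpleGraph V) : ℕ :=
  sInf {m : ℕ | ∃ σ : V ≃ Fin (Fintype.card V), mw G σ = m}

/-- Vertex type of the tree `L k`:  `L 0` is a single vertex; `L (k+1)` consists of a root
`u = Sum.inl ()`, three children `vᵢ = Sum.inr (i, Sum.inl ())` and, below each `vᵢ`, a copy
of `L k` whose vertices are `Sum.inr (i, Sum.inr a)`. -/
def LV : ℕ → Type
  | 0 => Unit
  | k + 1 => Unit ⊕ (Fin 3 × (Unit ⊕ LV k))

instance instDecEqLV : ∀ k, DecidableEq (LV k)
  | 0 => inferInstanceAs (DecidableEq Unit)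
  | k + 1 =>
    letI := instDecEqLV k
    inferInstanceAs (DecidableEq (Unit ⊕ (Fin 3 × (Unit ⊕ LV k))))

instance instFintypeLV : ∀ k, Fintype (LV k)
  | 0 => inferInstanceAs (Fintype Unit)
  | k + 1 =>
    letI := instFintypeLV k
    inferInstanceAs (Fintype (Unit ⊕ (Fin 3 × (Unit ⊕ LV k))))

/-- The root of `L k`. -/
def Lroot : ∀ k, LV k
  | 0 => ()
  | _ + 1 => Sum.inl ()

/-- The tree `L k`: the root `u` is adjacent to the three children `vᵢ`, each child `vᵢ` is
adjacent to the root of the `i`-th copy of `L k`, and within each copy the edges are those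
of `L k`. -/
def Lgraph : ∀ k, SimpleGraph (LV k)
  | 0 => ⊥
  | k + 1 => SimpleGraph.fromRel (fun x y : LV (k + 1) =>
      (∃ i : Fin 3, x = Sum.inl () ∧ y = Sum.inr (i, Sum.inl ())) ∨
      (∃ i : Fin 3, x = Sum.inr (i, Sum.inl ()) ∧ y = Sum.inr (i, Sum.inr (Lroot k))) ∨
      (∃ (i : Fin 3) (a b : LV k), x = Sum.inr (i, Sum.inr a) ∧ y = Sum.inr (i, Sum.inr b) ∧
        (Lgraph k).Adj a b))

section API
set_option linter.unusedSectionVars false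

variable {W : Type*} [Fintype W] {H G : SimpleGraph W} {M : Finset (Sym2 W)}

lemma IsInducedMatching.empty (H : SimpleGraph W) : IsInducedMatching H ∅ :=
  ⟨by simp, by simp⟩

lemma IsInducedMatching.subset {S : Finset (Sym2 W)} (h : IsInducedMatching H M)
    (hS : S ⊆ M) : IsInducedMatching H S :=
  ⟨Set.Subset.trans (Finset.coe_subset.mpr hS) h.1,
    fun e he f hf => h.2 e (hS he) f (hS hf)⟩

lemma mimSet_bdd (H : SimpleGraph W) :
    BddAbove {n : ℕ | ∃ M : Finset (Sym2 W), IsInducedMatching H M ∧ M.card = n} := by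
  refine ⟨Fintype.card (Sym2 W), ?_⟩
  rintro n ⟨M, -, rfl⟩
  simpa using M.card_le_univ

lemma card_le_mim (h : IsInducedMatching H M) : M.card ≤ mim H :=
  le_csSup (mimSet_bdd H) ⟨M, h, rfl⟩

lemma mim_le {n : ℕ} (h : ∀ M, IsInducedMatching H M → M.card ≤ n) : mim H ≤ n :=
  csSup_le ⟨0, ∅, .empty H, by simp⟩ (by rintro m ⟨M, hM, rfl⟩; exact h M hM)

lemma exists_mim (H : SimpleGraph W) :
    ∃ M : Finset (Sym2 W), IsInducedMatching H M ∧ M.card = mim H := by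
  have h : mim H ∈ {n : ℕ | ∃ M : Finset (Sym2 W), IsInducedMatching H M ∧ M.card = n} :=
    Nat.sSup_mem ⟨0, ∅, .empty H, by simp⟩ (mimSet_bdd H)
  exact h

lemma mw_le {σ : W ≃ Fin (Fintype.card W)} {n : ℕ}
    (h : ∀ i, 1 ≤ i → i < Fintype.card W → mim (cutGraph G σ i) ≤ n) : mw G σ ≤ n :=
  Finset.sup_le fun i hi => by
    rw [Finset.mem_Ico] at hi; exact h i hi.1 hi.2

lemma mim_le_mw {σ : W ≃ Fin (Fintype.card W)} {i : ℕ} (h1 : 1 ≤ i)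
    (h2 : i < Fintype.card W) : mim (cutGraph G σ i) ≤ mw G σ := by
  exact Finset.le_sup (f := fun i => mim (cutGraph G σ i)) (Finset.mem_Ico.mpr ⟨h1, h2⟩)

lemma lmw_le {σ : W ≃ Fin (Fintype.card W)} {n : ℕ} (h : mw G σ ≤ n) : lmw G ≤ n :=
  le_trans (Nat.sInf_le ⟨σ, rfl⟩) h

lemma le_lmw {n : ℕ} (h : ∀ σ : W ≃ Fin (Fintype.card W), n ≤ mw G σ) : n ≤ lmw G :=
  le_csInf ⟨mw G (Fintype.equivFin W), Fintype.equivFin W, rfl⟩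
    (by rintro m ⟨σ, rfl⟩; exact h σ)

end API
section Struct

/-- The root vertex of `L (k+1)`. -/
def top (k : ℕ) : LV (k + 1) := Sum.inl ()

/-- The child `vᵢ` in `L (k+1)`. -/
def vtx (k : ℕ) (i : Fin 3) : LV (k + 1) := Sum.inr (i, Sum.inl ())

/-- The embedding of the `i`-th copy of `L k` into `L (k+1)`. -/
def cop {k : ℕ} (i : Fin 3) (a : LV k) : LV (k + 1) := Sum.inr (i, Sum.inr a)

/-- Identity repackaging of `LV (k+1)` as a sum type. -/
def unpack {k : ℕ} (x : LV (k + 1)) : Unit ⊕ (Fin 3 × (Unit ⊕ LV k)) := x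

lemma top_ne_vtx {k : ℕ} {i : Fin 3} : top k ≠ vtx k i := fun h => by
  have := congrArg unpack h; simp [unpack, top, vtx] at this
lemma top_ne_cop {k : ℕ} {i : Fin 3} {a : LV k} : top k ≠ cop i a := fun h => by
  have := congrArg unpack h; simp [unpack, top, cop] at this
lemma vtx_ne_cop {k : ℕ} {i j : Fin 3} {a : LV k} : vtx k i ≠ cop j a := fun h => by
  have := congrArg unpack h; simp [unpack, vtx, cop] at this
lemma cop_eq_cop {k : ℕ} {i j : Fin 3} {a b : LV k} (h : cop i a = cop j b) :
    i = j ∧ a = b := by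
  have := congrArg unpack h; simpa [unpack, cop] using this
lemma vtx_eq_vtx {k : ℕ} {i j : Fin 3} (h : vtx k i = vtx k j) : i = j := by
  have := congrArg unpack h; simpa [unpack, vtx] using this
lemma cop_injective {k : ℕ} (i : Fin 3) : Function.Injective (cop (k := k) i) :=
  fun _ _ h => (cop_eq_cop h).2
lemma cop_ne_cop {k : ℕ} {i j : Fin 3} {a b : LV k} (h : i ≠ j) : cop i a ≠ cop j b :=
  fun hc => h (cop_eq_cop hc).1

lemma LV_succ_cases {k : ℕ} (x : LV (k + 1)) :
    x = top k ∨ (∃ i, x = vtx k i) ∨ ∃ i a, x = cop i a := by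
  rcases x with ⟨⟩ | ⟨i, ⟨⟩ | a⟩
  · exact Or.inl rfl
  · exact Or.inr (Or.inl ⟨i, rfl⟩)
  · exact Or.inr (Or.inr ⟨i, a, rfl⟩)

lemma adj_iff {k : ℕ} {x y : LV (k + 1)} : (Lgraph (k + 1)).Adj x y ↔
    (∃ i, (x = top k ∧ y = vtx k i) ∨ (y = top k ∧ x = vtx k i)) ∨
    (∃ i, (x = vtx k i ∧ y = cop i (Lroot k)) ∨ (y = vtx k i ∧ x = cop i (Lroot k))) ∨
    (∃ (i : Fin 3) (a b : LV k), x = cop i a ∧ y = cop i b ∧ (Lgraph k).Adj a b) := by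
  show (SimpleGraph.fromRel _).Adj x y ↔ _
  rw [SimpleGraph.fromRel_adj]
  constructor
  · rintro ⟨hne, h | h⟩ <;>
      rcases h with ⟨i, h1, h2⟩ | ⟨i, h1, h2⟩ | ⟨i, a, b, h1, h2, h3⟩
    · exact Or.inl ⟨i, Or.inl ⟨h1, h2⟩⟩
    · exact Or.inr (Or.inl ⟨i, Or.inl ⟨h1, h2⟩⟩)
    · exact Or.inr (Or.inr ⟨i, a, b, h1, h2, h3⟩)
    · exact Or.inl ⟨i, Or.inr ⟨h1, h2⟩⟩
    · exact Or.inr (Or.inl ⟨i, Or.inr ⟨h1, h2⟩⟩)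
    · exact Or.inr (Or.inr ⟨i, b, a, h2, h1, h3.symm⟩)
  · rintro (⟨i, ⟨h1, h2⟩ | ⟨h1, h2⟩⟩ | ⟨i, ⟨h1, h2⟩ | ⟨h1, h2⟩⟩ | ⟨i, a, b, h1, h2, h3⟩)
    · exact ⟨by rw [h1, h2]; exact top_ne_vtx, Or.inl (Or.inl ⟨i, h1, h2⟩)⟩
    · exact ⟨by rw [h1, h2]; exact top_ne_vtx.symm, Or.inr (Or.inl ⟨i, h1, h2⟩)⟩
    · exact ⟨by rw [h1, h2]; exact vtx_ne_cop, Or.inl (Or.inr (Or.inl ⟨i, h1, h2⟩))⟩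
    · exact ⟨by rw [h1, h2]; exact vtx_ne_cop.symm, Or.inr (Or.inr (Or.inl ⟨i, h1, h2⟩))⟩
    · refine ⟨by rw [h1, h2]; exact fun hc => h3.ne (cop_injective i hc), ?_⟩
      exact Or.inl (Or.inr (Or.inr ⟨i, a, b, h1, h2, h3⟩))

lemma adj_cop_cop {k : ℕ} {i : Fin 3} {a b : LV k} :
    (Lgraph (k + 1)).Adj (cop i a) (cop i b) ↔ (Lgraph k).Adj a b := by
  rw [adj_iff]
  constructor
  · rintro (⟨j, ⟨h1, -⟩ | ⟨-, h1⟩⟩ | ⟨j, ⟨h1, -⟩ | ⟨h1, -⟩⟩ | ⟨j, c, d, h1, h2, h3⟩)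
    · exact absurd h1.symm top_ne_cop
    · exact absurd h1.symm vtx_ne_cop
    · exact absurd h1.symm vtx_ne_cop
    · exact absurd h1.symm vtx_ne_cop
    · obtain ⟨rfl, rfl⟩ : j = i ∧ c = a := cop_eq_cop h1.symm
      obtain rfl : d = b := (cop_eq_cop h2.symm).2
      exact h3
  · intro h
    exact Or.inr (Or.inr ⟨i, a, b, rfl, rfl, h⟩)

lemma adj_top_iff {k : ℕ} {z : LV (k + 1)} :
    (Lgraph (k + 1)).Adj (top k) z ↔ ∃ i, z = vtx k i := by
  rw [adj_iff]
  constructor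
  · rintro (⟨i, ⟨-, h2⟩ | ⟨-, h2⟩⟩ | ⟨i, ⟨h1, -⟩ | ⟨-, h1⟩⟩ | ⟨i, a, b, h1, -, -⟩)
    · exact ⟨i, h2⟩
    · exact absurd h2 top_ne_vtx
    · exact absurd h1 top_ne_vtx
    · exact absurd h1 top_ne_cop
    · exact absurd h1 top_ne_cop
  · rintro ⟨i, rfl⟩
    exact Or.inl ⟨i, Or.inl ⟨rfl, rfl⟩⟩

lemma adj_vtx_iff {k : ℕ} {i : Fin 3} {z : LV (k + 1)} :
    (Lgraph (k + 1)).Adj (vtx k i) z ↔ z = top k ∨ z = cop i (Lroot k) := by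
  rw [adj_iff]
  constructor
  · rintro (⟨j, ⟨h1, -⟩ | ⟨h1, -⟩⟩ | ⟨j, ⟨h1, h2⟩ | ⟨h1, h2⟩⟩ | ⟨j, a, b, h1, -, -⟩)
    · exact absurd h1.symm top_ne_vtx
    · exact Or.inl h1
    · obtain rfl : j = i := (vtx_eq_vtx h1).symm
      exact Or.inr h2
    · exact absurd h2 vtx_ne_cop
    · exact absurd h1 vtx_ne_cop
  · rintro (rfl | rfl)
    · exact Or.inl ⟨i, Or.inr ⟨rfl, rfl⟩⟩
    · exact Or.inr (Or.inl ⟨i, Or.inl ⟨rfl, rfl⟩⟩)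

lemma adj_cop_iff {k : ℕ} {i : Fin 3} {a : LV k} {z : LV (k + 1)} :
    (Lgraph (k + 1)).Adj (cop i a) z ↔
      (∃ b, z = cop i b ∧ (Lgraph k).Adj a b) ∨ (a = Lroot k ∧ z = vtx k i) := by
  rw [adj_iff]
  constructor
  · rintro (⟨j, ⟨h1, -⟩ | ⟨-, h1⟩⟩ | ⟨j, ⟨h1, -⟩ | ⟨h1, h2⟩⟩ | ⟨j, c, d, h1, h2, h3⟩)
    · exact absurd h1.symm top_ne_cop
    · exact absurd h1.symm vtx_ne_cop
    · exact absurd h1.symm vtx_ne_cop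
    · obtain ⟨rfl, rfl⟩ : j = i ∧ Lroot k = a := cop_eq_cop h2.symm
      exact Or.inr ⟨rfl, h1⟩
    · obtain ⟨rfl, rfl⟩ : j = i ∧ c = a := cop_eq_cop h1.symm
      exact Or.inl ⟨d, h2, h3⟩
  · rintro (⟨b, rfl, h⟩ | ⟨rfl, rfl⟩)
    · exact Or.inr (Or.inr ⟨i, a, b, rfl, rfl, h⟩)
    · exact Or.inr (Or.inl ⟨i, Or.inr ⟨rfl, rfl⟩⟩)

/-- The graph homomorphism embedding a copy. -/
def copHom (k : ℕ) (i : Fin 3) : Lgraph k →g Lgraph (k + 1) :=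
  ⟨cop i, fun h => adj_cop_cop.mpr h⟩

lemma reachable_root : ∀ (k : ℕ) (a : LV k), (Lgraph k).Reachable (Lroot k) a
  | 0, a => by
    have : Subsingleton (LV 0) := inferInstanceAs (Subsingleton Unit)
    rw [Subsingleton.elim a (Lroot 0)]
  | k + 1, x => by
    have step1 : ∀ i, (Lgraph (k + 1)).Reachable (Lroot (k + 1)) (vtx k i) := fun i =>
      (adj_top_iff.mpr ⟨i, rfl⟩).reachable
    rcases LV_succ_cases x with rfl | ⟨i, rfl⟩ | ⟨i, a, rfl⟩
    · exact SimpleGraph.Reachable.refl _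
    · exact step1 i
    · exact ((step1 i).trans (adj_vtx_iff.mpr (Or.inr rfl)).reachable).trans
        ((reachable_root k a).map (copHom k i))

lemma card_LV_succ (k : ℕ) :
    Fintype.card (LV (k + 1)) = 3 * Fintype.card (LV k) + 4 := by
  have : Fintype.card (LV (k + 1)) = Fintype.card (Unit ⊕ (Fin 3 × (Unit ⊕ LV k))) :=
    Fintype.card_congr ⟨unpack, fun y => y, fun _ => rfl, fun _ => rfl⟩
  rw [this]
  simp
  ring

lemma exists_adj (k : ℕ) (x : LV (k + 1)) : ∃ y, (Lgraph (k + 1)).Adj x y := by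
  rcases LV_succ_cases x with rfl | ⟨i, rfl⟩ | ⟨i, a, rfl⟩
  · exact ⟨vtx k 0, adj_top_iff.mpr ⟨0, rfl⟩⟩
  · exact ⟨top k, adj_vtx_iff.mpr (Or.inl rfl)⟩
  · by_cases h : a = Lroot k
    · exact ⟨vtx k i, adj_cop_iff.mpr (Or.inr ⟨h, rfl⟩)⟩
    · obtain ⟨w⟩ := (reachable_root k a).symm
      cases w with
      | nil => exact absurd rfl h
      | cons hadj _ => exact ⟨cop i _, adj_cop_cop.mpr hadj⟩

end Struct
section Transfer

variable {W' W : Type*} [Fintype W'] [Fintype W] {H' : SimpleGraph W'} {H : SimpleGraph W}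
  {φ : W' → W}

set_option linter.unusedSectionVars false

lemma IsInducedMatching.map_emb (hinj : Function.Injective φ)
    (hadj : ∀ a b, H'.Adj a b ↔ H.Adj (φ a) (φ b)) {M' : Finset (Sym2 W')}
    (h : IsInducedMatching H' M') :
    ∃ Mb : Finset (Sym2 W), IsInducedMatching H Mb ∧ Mb.card = M'.card ∧
      ∀ f ∈ Mb, ∃ a b, f = s(φ a, φ b) := by
  refine ⟨M'.image (Sym2.map φ), ⟨?_, ?_⟩, ?_, ?_⟩
  · intro e he
    simp only [Finset.coe_image, Set.mem_image, Finset.mem_coe] at he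
    obtain ⟨e', he', rfl⟩ := he
    induction e' using Sym2.ind with
    | _ a b =>
      rw [Sym2.map_pair_eq, SimpleGraph.mem_edgeSet]
      exact (hadj a b).mp (h.1 he')
  · intro e he f hf hne u hu v hv
    simp only [Finset.mem_image] at he hf
    obtain ⟨e', he', rfl⟩ := he
    obtain ⟨f', hf', rfl⟩ := hf
    have hef : e' ≠ f' := fun hc => hne (by rw [hc])
    induction e' using Sym2.ind with
    | _ a b =>
      induction f' using Sym2.ind with
      | _ c d =>
        rw [Sym2.map_pair_eq, Sym2.mem_iff] at hu hv
        have key : ∀ x ∈ s(a, b), ∀ y ∈ s(c, d), x ≠ y ∧ ¬H'.Adj x y :=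
          h.2 _ he' _ hf' hef
        obtain ⟨u', hu', rfl⟩ : ∃ u' ∈ s(a, b), u = φ u' := by
          rcases hu with rfl | rfl
          exacts [⟨a, by simp⟩, ⟨b, by simp⟩]
        obtain ⟨v', hv', rfl⟩ : ∃ v' ∈ s(c, d), v = φ v' := by
          rcases hv with rfl | rfl
          exacts [⟨c, by simp⟩, ⟨d, by simp⟩]
        have := key u' hu' v' hv'
        exact ⟨fun hc => this.1 (hinj hc), fun hc => this.2 ((hadj _ _).mpr hc)⟩
  · exact Finset.card_image_of_injective _ (Sym2.map.injective hinj)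
  · intro f hf
    rw [Finset.mem_image] at hf
    obtain ⟨e', he', rfl⟩ := hf
    induction e' using Sym2.ind with
    | _ a b => exact ⟨a, b, Sym2.map_pair_eq _ _ _⟩

lemma IsInducedMatching.pullback (hinj : Function.Injective φ)
    (hadj : ∀ a b, H'.Adj a b ↔ H.Adj (φ a) (φ b)) {M : Finset (Sym2 W)}
    (h : IsInducedMatching H M) (hall : ∀ e ∈ M, ∃ a b, e = s(φ a, φ b)) :
    ∃ M' : Finset (Sym2 W'), IsInducedMatching H' M' ∧ M'.card = M.card := by
  rcases eq_or_ne M ∅ with rfl | hM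
  · exact ⟨∅, .empty H', by simp⟩
  obtain ⟨e₀, he₀⟩ := Finset.nonempty_iff_ne_empty.mpr hM
  obtain ⟨a₀, -, -⟩ := hall e₀ he₀
  haveI : Nonempty W' := ⟨a₀⟩
  set g : W → W' := Function.invFun φ with hg
  have hgφ : ∀ a, g (φ a) = a := fun a => Function.leftInverse_invFun hinj a
  have hrepr : ∀ e ∈ M, Sym2.map φ (Sym2.map g e) = e := by
    intro e he
    obtain ⟨a, b, rfl⟩ := hall e he
    simp [Sym2.map_pair_eq, hgφ]
  have hinjM : Set.InjOn (Sym2.map g) M := by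
    intro e he f hf hef
    rw [← hrepr e he, ← hrepr f hf, hef]
  refine ⟨M.image (Sym2.map g), ⟨?_, ?_⟩, Finset.card_image_of_injOn hinjM⟩
  · intro e' he'
    simp only [Finset.coe_image, Set.mem_image, Finset.mem_coe] at he'
    obtain ⟨e, he, rfl⟩ := he'
    obtain ⟨a, b, rfl⟩ := hall e he
    have hadj' : H.Adj (φ a) (φ b) := h.1 he
    rw [Sym2.map_pair_eq, hgφ, hgφ, SimpleGraph.mem_edgeSet]
    exact (hadj a b).mpr hadj'
  · intro e' he' f' hf' hne u hu v hv
    simp only [Finset.mem_image] at he' hf'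
    obtain ⟨e, he, rfl⟩ := he'
    obtain ⟨f, hf, rfl⟩ := hf'
    have hef : e ≠ f := fun hc => hne (by rw [hc])
    obtain ⟨a, b, rfl⟩ := hall e he
    obtain ⟨c, d, rfl⟩ := hall f hf
    rw [Sym2.map_pair_eq, hgφ, hgφ, Sym2.mem_iff] at hu hv
    have key : ∀ x ∈ s(φ a, φ b), ∀ y ∈ s(φ c, φ d), x ≠ y ∧ ¬H.Adj x y :=
      h.2 _ he _ hf hef
    have h1 : φ u ∈ s(φ a, φ b) := by rcases hu with rfl | rfl <;> simp
    have h2 : φ v ∈ s(φ c, φ d) := by rcases hv with rfl | rfl <;> simp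
    have := key (φ u) h1 (φ v) h2
    exact ⟨fun hc => this.1 (congrArg φ hc), fun hc => this.2 ((hadj u v).mp hc)⟩

/-- Adjacency transfer for cut graphs along a position-respecting injection. -/
lemma cutGraph_adj_transfer {G' : SimpleGraph W'} {G : SimpleGraph W}
    {σ' : W' ≃ Fin (Fintype.card W')} {σ : W ≃ Fin (Fintype.card W)} {t p : ℕ}
    (hadj : ∀ a b, G'.Adj a b ↔ G.Adj (φ a) (φ b))
    (hpos : ∀ a, (σ' a : ℕ) < t ↔ (σ (φ a) : ℕ) < p) (a b : W') :
    (cutGraph G' σ' t).Adj a b ↔ (cutGraph G σ p).Adj (φ a) (φ b) := by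
  have hpos' : ∀ a, t ≤ (σ' a : ℕ) ↔ p ≤ (σ (φ a) : ℕ) := by
    intro a
    rw [← not_lt, ← not_lt, not_iff_not]
    exact hpos a
  show (G'.Adj a b ∧ _) ↔ (G.Adj (φ a) (φ b) ∧ _)
  rw [hadj, hpos, hpos, hpos', hpos']

end Transfer
section Upper

/-- Position function for the recursive layout of `L (k+1)`:
root first, then each copy (recursively laid out) followed by its `vᵢ`. -/
def layF (k : ℕ) (σk : LV k ≃ Fin (Fintype.card (LV k))) (x : LV (k + 1)) : ℕ :=
  match unpack x with
  | Sum.inl _ => 0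
  | Sum.inr (i, Sum.inl _) => 1 + (i : ℕ) * (Fintype.card (LV k) + 1) + Fintype.card (LV k)
  | Sum.inr (i, Sum.inr a) => 1 + (i : ℕ) * (Fintype.card (LV k) + 1) + (σk a : ℕ)

variable {k : ℕ} (σk : LV k ≃ Fin (Fintype.card (LV k)))

lemma layF_top : layF k σk (top k) = 0 := rfl
lemma layF_vtx (i : Fin 3) :
    layF k σk (vtx k i) = 1 + (i : ℕ) * (Fintype.card (LV k) + 1) + Fintype.card (LV k) := rfl
lemma layF_cop (i : Fin 3) (a : LV k) :
    layF k σk (cop i a) = 1 + (i : ℕ) * (Fintype.card (LV k) + 1) + (σk a : ℕ) := rfl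

lemma block_eq {n : ℕ} {i j : Fin 3} {s t : ℕ} (hs : s ≤ n) (ht : t ≤ n)
    (h : 1 + (i : ℕ) * (n + 1) + s = 1 + (j : ℕ) * (n + 1) + t) : i = j ∧ s = t := by
  have : (i : ℕ) = (j : ℕ) ∧ s = t := by fin_cases i <;> fin_cases j <;> simp_all <;> omega
  exact ⟨Fin.ext this.1, this.2⟩

lemma layF_lt (x : LV (k + 1)) : layF k σk x < Fintype.card (LV (k + 1)) := by
  rw [card_LV_succ]
  have hσ : ∀ a : LV k, (σk a : ℕ) < Fintype.card (LV k) := fun a => (σk a).isLt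
  rcases LV_succ_cases x with rfl | ⟨i, rfl⟩ | ⟨i, a, rfl⟩
  · rw [layF_top]; omega
  · rw [layF_vtx]; have := i.isLt; fin_cases i <;> simp <;> omega
  · rw [layF_cop]; have := hσ a; fin_cases i <;> simp <;> omega

lemma layF_inj : Function.Injective (layF k σk) := by
  intro x y h
  have hσ : ∀ a : LV k, (σk a : ℕ) < Fintype.card (LV k) := fun a => (σk a).isLt
  rcases LV_succ_cases x with rfl | ⟨i, rfl⟩ | ⟨i, a, rfl⟩ <;>
    rcases LV_succ_cases y with rfl | ⟨j, rfl⟩ | ⟨j, b, rfl⟩ <;>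
      simp only [layF_top, layF_vtx, layF_cop] at h
  · rfl
  · exact absurd h (by omega)
  · exact absurd h (by have := hσ b; omega)
  · exact absurd h.symm (by omega)
  · obtain ⟨rfl, -⟩ := block_eq le_rfl le_rfl h; rfl
  · obtain ⟨-, heq⟩ := block_eq le_rfl (le_of_lt (hσ b)) h
    exact absurd heq (by have := hσ b; omega)
  · exact absurd h.symm (by have := hσ a; omega)
  · obtain ⟨-, heq⟩ := block_eq (le_of_lt (hσ a)) le_rfl h
    exact absurd heq (by have := hσ a; omega)
  · obtain ⟨rfl, heq⟩ := block_eq (le_of_lt (hσ a)) (le_of_lt (hσ b)) h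
    obtain rfl : a = b := σk.injective (Fin.ext heq)
    rfl

/-- The recursive layout of `L (k+1)` as an equivalence. -/
def lay : LV (k + 1) ≃ Fin (Fintype.card (LV (k + 1))) :=
  Equiv.ofBijective (fun x => ⟨layF k σk x, layF_lt σk x⟩)
    ((Fintype.bijective_iff_injective_and_card _).mpr
      ⟨fun x y h => layF_inj σk (congrArg Fin.val h), by simp⟩)

lemma lay_coe (x : LV (k + 1)) : ((lay σk x : Fin _) : ℕ) = layF k σk x := rfl

end Upper
section UB

lemma ub : ∀ k : ℕ, ∃ σ : LV k ≃ Fin (Fintype.card (LV k)),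
    ((σ (Lroot k) : Fin _) : ℕ) = 0 ∧ mw (Lgraph k) σ ≤ k := by
  intro k
  induction k with
  | zero =>
    have hs : Subsingleton (LV 0) := inferInstanceAs (Subsingleton Unit)
    have h1 : Fintype.card (LV 0) = 1 :=
      Fintype.card_eq_one_iff.mpr ⟨Lroot 0, fun y => Subsingleton.elim y _⟩
    refine ⟨Fintype.equivFin _, ?_, ?_⟩
    · have := (Fintype.equivFin (LV 0) (Lroot 0)).isLt
      omega
    · exact mw_le fun i hi1 hi2 => absurd hi2 (by omega)
  | succ k IH =>
    obtain ⟨σk, hroot, hmw⟩ := IH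
    have hn1 : 1 ≤ Fintype.card (LV k) := Fintype.card_pos_iff.mpr ⟨Lroot k⟩
    refine ⟨lay σk, rfl, ?_⟩
    apply mw_le
    intro i hi1 hi2
    rw [card_LV_succ] at hi2
    apply mim_le
    intro M hM
    set σ := lay σk with hσdef
    have pos_top : ((σ (top k) : Fin _) : ℕ) = 0 := rfl
    have pos_vtx : ∀ j : Fin 3, ((σ (vtx k j) : Fin _) : ℕ) = 1 + (j : ℕ) * ((Fintype.card (LV k)) + 1) + (Fintype.card (LV k)) :=
      fun j => rfl
    have pos_cop : ∀ (j : Fin 3) (a : LV k),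
        ((σ (cop j a) : Fin _) : ℕ) = 1 + (j : ℕ) * ((Fintype.card (LV k)) + 1) + (σk a : ℕ) := fun j a => rfl
    have hedge : ∀ e ∈ M, e ∈ (cutGraph (Lgraph (k + 1)) σ i).edgeSet := fun e he => hM.1 he
    -- classification of the edges of M
    have classify : ∀ e ∈ M,
        (∃ (j : Fin 3) (a b : LV k), e = s(cop j a, cop j b) ∧
          1 + (j : ℕ) * ((Fintype.card (LV k)) + 1) < i ∧ i ≤ (j : ℕ) * ((Fintype.card (LV k)) + 1) + (Fintype.card (LV k))) ∨
        (∃ j : Fin 3, e = s(top k, vtx k j) ∧ i ≤ 1 + (j : ℕ) * ((Fintype.card (LV k)) + 1) + (Fintype.card (LV k))) ∨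
        (∃ j : Fin 3, e = s(vtx k j, cop j (Lroot k)) ∧
          1 + (j : ℕ) * ((Fintype.card (LV k)) + 1) < i ∧ i ≤ 1 + (j : ℕ) * ((Fintype.card (LV k)) + 1) + (Fintype.card (LV k))) := by
      intro e he
      revert he
      induction e using Sym2.ind with
      | _ x y =>
        intro he
        obtain ⟨hadj, hcr⟩ : (cutGraph (Lgraph (k + 1)) σ i).Adj x y :=
          (SimpleGraph.mem_edgeSet _).mp (hedge _ he)
        rcases adj_iff.mp hadj with ⟨j, ⟨rfl, rfl⟩ | ⟨rfl, rfl⟩⟩ |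
          ⟨j, ⟨rfl, rfl⟩ | ⟨rfl, rfl⟩⟩ | ⟨j, a, b, rfl, rfl, hab⟩
        · refine Or.inr (Or.inl ⟨j, rfl, ?_⟩)
          rw [pos_top, pos_vtx] at hcr
          omega
        · refine Or.inr (Or.inl ⟨j, Sym2.eq_swap, ?_⟩)
          rw [pos_top, pos_vtx] at hcr
          omega
        · refine Or.inr (Or.inr ⟨j, rfl, ?_⟩)
          rw [pos_vtx, pos_cop, hroot] at hcr
          omega
        · refine Or.inr (Or.inr ⟨j, Sym2.eq_swap, ?_⟩)
          rw [pos_vtx, pos_cop, hroot] at hcr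
          omega
        · refine Or.inl ⟨j, a, b, rfl, ?_⟩
          rw [pos_cop, pos_cop] at hcr
          have := (σk a).isLt
          have := (σk b).isLt
          omega
    set S := M.filter (fun e => ∃ (j : Fin 3) (a b : LV k), e = s(cop j a, cop j b)) with hSdef
    have hSsub : S ⊆ M := Finset.filter_subset _ _
    have block_disj : ∀ (j j' : Fin 3), 1 + (j : ℕ) * ((Fintype.card (LV k)) + 1) < i →
        i ≤ 1 + (j : ℕ) * ((Fintype.card (LV k)) + 1) + (Fintype.card (LV k)) →
        1 + (j' : ℕ) * ((Fintype.card (LV k)) + 1) < i →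
        i ≤ 1 + (j' : ℕ) * ((Fintype.card (LV k)) + 1) + (Fintype.card (LV k)) → j = j' := by
      have key : ∀ u v : ℕ, u < 3 → v < 3 → 1 + u * (Fintype.card (LV k) + 1) < i →
          i ≤ 1 + u * (Fintype.card (LV k) + 1) + (Fintype.card (LV k)) →
          1 + v * (Fintype.card (LV k) + 1) < i →
          i ≤ 1 + v * (Fintype.card (LV k) + 1) + (Fintype.card (LV k)) → u = v := by
        intro u v hu hv
        interval_cases u <;> interval_cases v <;> omega
      intro j j' h1 h2 h3 h4
      exact Fin.ext (key j j' j.isLt j'.isLt h1 h2 h3 h4)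
    -- at most one special (non-copy-internal) edge
    have stepA : (M \ S).card ≤ 1 := by
      rw [Finset.card_le_one]
      intro e he f hf
      by_contra hne
      rw [Finset.mem_sdiff] at he hf
      obtain ⟨heM, heS⟩ := he
      obtain ⟨hfM, hfS⟩ := hf
      have hclass : ∀ g ∈ M, g ∉ S →
          (∃ j : Fin 3, g = s(top k, vtx k j) ∧ i ≤ 1 + (j : ℕ) * ((Fintype.card (LV k)) + 1) + (Fintype.card (LV k))) ∨
          (∃ j : Fin 3, g = s(vtx k j, cop j (Lroot k)) ∧
            1 + (j : ℕ) * ((Fintype.card (LV k)) + 1) < i ∧ i ≤ 1 + (j : ℕ) * ((Fintype.card (LV k)) + 1) + (Fintype.card (LV k))) := by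
        intro g hg hgS
        rcases classify g hg with ⟨j, a, b, rfl, -⟩ | h | h
        · exact absurd (Finset.mem_filter.mpr ⟨hg, j, a, b, rfl⟩) hgS
        · exact Or.inl h
        · exact Or.inr h
      have hpair := hM.2 e heM f hfM hne
      rcases hclass e heM heS with ⟨j, rfl, hje⟩ | ⟨j, rfl, hj1, hj2⟩ <;>
        rcases hclass f hfM hfS with ⟨j', rfl, hje'⟩ | ⟨j', rfl, hj1', hj2'⟩
      · exact (hpair (top k) (Sym2.mem_mk_left _ _) (top k) (Sym2.mem_mk_left _ _)).1 rfl
      · by_cases hjj : j = j'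
        · subst hjj
          exact (hpair (vtx k j) (Sym2.mem_mk_right _ _) (vtx k j) (Sym2.mem_mk_left _ _)).1 rfl
        · refine (hpair (top k) (Sym2.mem_mk_left _ _) (vtx k j') (Sym2.mem_mk_left _ _)).2 ?_
          refine ⟨adj_top_iff.mpr ⟨j', rfl⟩, Or.inl ?_⟩
          rw [pos_top, pos_vtx]
          omega
      · by_cases hjj : j = j'
        · subst hjj
          exact (hpair (vtx k j) (Sym2.mem_mk_left _ _) (vtx k j) (Sym2.mem_mk_right _ _)).1 rfl
        · refine (hpair (vtx k j) (Sym2.mem_mk_left _ _) (top k) (Sym2.mem_mk_left _ _)).2 ?_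
          refine ⟨(adj_top_iff.mpr ⟨j, rfl⟩).symm, Or.inr ?_⟩
          rw [pos_top, pos_vtx]
          omega
      · by_cases hjj : j = j'
        · subst hjj; exact hne rfl
        · exact hjj (block_disj j j' hj1 hj2 hj1' hj2')
    -- bounds for copy-internal edges
    have copBounds : ∀ (j : Fin 3) (a b : LV k), s(cop j a, cop j b) ∈ M →
        1 + (j : ℕ) * ((Fintype.card (LV k)) + 1) < i ∧ i ≤ (j : ℕ) * ((Fintype.card (LV k)) + 1) + (Fintype.card (LV k)) := by
      intro j a b hmem
      obtain ⟨-, hcr⟩ : (cutGraph (Lgraph (k + 1)) σ i).Adj (cop j a) (cop j b) :=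
        (SimpleGraph.mem_edgeSet _).mp (hedge _ hmem)
      rw [pos_cop, pos_cop] at hcr
      have := (σk a).isLt
      have := (σk b).isLt
      omega
    -- the copy-internal edges pull back to an induced matching of the copy
    have stepB : S.card ≤ k := by
      rcases Finset.eq_empty_or_nonempty S with hSe | ⟨e₀, he₀⟩
      · rw [hSe]; simp
      obtain ⟨j₀, a₀, b₀, he₀eq⟩ := (Finset.mem_filter.mp he₀).2
      have hb₀ := copBounds j₀ a₀ b₀ (he₀eq ▸ hSsub he₀)
      have ht1 : 1 ≤ i - (1 + (j₀ : ℕ) * ((Fintype.card (LV k)) + 1)) := by omega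
      have ht2 : i - (1 + (j₀ : ℕ) * ((Fintype.card (LV k)) + 1)) < (Fintype.card (LV k)) := by omega
      have hall : ∀ e ∈ S, ∃ a b, e = s(cop j₀ a, cop j₀ b) := by
        intro e heS
        obtain ⟨j, a, b, rfl⟩ := (Finset.mem_filter.mp heS).2
        have hb := copBounds j a b (hSsub heS)
        obtain rfl : j = j₀ := block_disj j j₀ hb.1 (by omega) hb₀.1 (by omega)
        exact ⟨a, b, rfl⟩
      have hpos : ∀ a : LV k, (σk a : ℕ) < i - (1 + (j₀ : ℕ) * ((Fintype.card (LV k)) + 1)) ↔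
          ((σ (cop j₀ a) : Fin _) : ℕ) < i := by
        intro a
        rw [pos_cop]
        have := (σk a).isLt
        omega
      obtain ⟨M', hM', hcard'⟩ :=
        IsInducedMatching.pullback (H' := cutGraph (Lgraph k) σk (i - (1 + (j₀ : ℕ) * ((Fintype.card (LV k)) + 1))))
          (cop_injective j₀)
          (fun a b => cutGraph_adj_transfer (fun a b => adj_cop_cop.symm) hpos a b)
          (hM.subset hSsub) hall
      calc S.card = M'.card := hcard'.symm
        _ ≤ mim (cutGraph (Lgraph k) σk (i - (1 + (j₀ : ℕ) * ((Fintype.card (LV k)) + 1)))) := card_le_mim hM'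
        _ ≤ mw (Lgraph k) σk := mim_le_mw ht1 ht2
        _ ≤ k := hmw
    have hsplit := Finset.card_sdiff_add_card_eq_card hSsub
    omega

end UB
section LB

lemma sym2_cases {α : Type*} (e : Sym2 α) : ∃ x y, e = s(x, y) :=
  Sym2.ind (fun x y => ⟨x, y, rfl⟩) e

lemma lb : ∀ (k : ℕ) (σ : LV k ≃ Fin (Fintype.card (LV k))), k ≤ mw (Lgraph k) σ := by
  intro k
  induction k with
  | zero => exact fun σ => Nat.zero_le _
  | succ k IH =>
    intro σ
    by_contra hcon'
    have hcon : mw (Lgraph (k + 1)) σ ≤ k := by omega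
    have hcard1 : 1 ≤ Fintype.card (LV k) := Fintype.card_pos_iff.mpr ⟨Lroot k⟩
    have hcardS : Fintype.card (LV (k + 1)) = 3 * Fintype.card (LV k) + 4 := card_LV_succ k
    rcases Nat.eq_zero_or_pos k with rfl | hk
    · -- k = 0 : the first cut crosses an edge, so mw ≥ 1
      set x := σ.symm ⟨0, by omega⟩ with hx
      obtain ⟨y, hxy⟩ := exists_adj 0 x
      have hσx : (σ x : ℕ) = 0 := by rw [hx, Equiv.apply_symm_apply]
      have hcardS' : Fintype.card (LV 1) = 3 * Fintype.card (LV 0) + 4 := hcardS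
      have hσy : 1 ≤ (σ y : ℕ) := by
        rcases Nat.eq_zero_or_pos (σ y : ℕ) with h0 | h1
        · exact absurd (σ.injective (Fin.ext (by omega))) hxy.ne
        · exact h1
      have hIM : IsInducedMatching (cutGraph (Lgraph 1) σ 1) {s(x, y)} := by
        constructor
        · intro e he
          simp only [Finset.coe_singleton, Set.mem_singleton_iff] at he
          subst he
          exact (SimpleGraph.mem_edgeSet _).mpr ⟨hxy, Or.inl ⟨by omega, hσy⟩⟩
        · intro e he f hf hne
          rw [Finset.mem_singleton] at he hf
          exact absurd (he.trans hf.symm) hne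
      have h1 : 1 ≤ mim (cutGraph (Lgraph 1) σ 1) := by
        have := card_le_mim hIM
        simpa using this
      have := mim_le_mw (G := Lgraph 1) (σ := σ) (i := 1) le_rfl (by omega)
      have hcon2 : mw (Lgraph 1) σ ≤ 0 := hcon
      omega
    -- main case k ≥ 1
    have main : ∀ j : Fin 3, ∃ p : ℕ,
        (∃ a, (σ (cop j a) : ℕ) < p) ∧ (∃ a, p ≤ (σ (cop j a) : ℕ)) ∧
        (∀ x y : LV (k + 1), (Lgraph (k + 1)).Adj x y →
          (∀ b, x ≠ cop j b) → (∀ b, y ≠ cop j b) → x ≠ vtx k j → y ≠ vtx k j →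
          ¬((σ x : ℕ) < p ∧ p ≤ (σ y : ℕ))) := by
      intro j
      letI : LinearOrder (LV k) :=
        LinearOrder.lift' (fun a => (σ (cop j a) : ℕ))
          (fun a b h => cop_injective j (σ.injective (Fin.ext h)))
      have hle : ∀ a b : LV k, a ≤ b ↔ (σ (cop j a) : ℕ) ≤ (σ (cop j b) : ℕ) :=
        fun a b => Iff.rfl
      set σ' := (monoEquivOfFin (LV k) rfl).symm with hσ'
      set σ'' : LV k ≃ Fin (Fintype.card (LV k)) := σ'.toEquiv with hσ''
      have hIH := IH σ''
      rw [mw] at hIH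
      obtain ⟨t, htmem, hmimt⟩ := (Finset.le_sup_iff (by simpa using hk)).mp hIH
      rw [Finset.mem_Ico] at htmem
      have hmimt' : k ≤ mim (cutGraph (Lgraph k) σ'' t) := hmimt
      obtain ⟨M', hM'IM, hM'card⟩ := exists_mim (cutGraph (Lgraph k) σ'' t)
      set w : LV k := σ''.symm ⟨t - 1, by omega⟩ with hw
      set p : ℕ := (σ (cop j w) : ℕ) + 1 with hp
      have hσ''w : (σ'' w : ℕ) = t - 1 := by rw [hw, Equiv.apply_symm_apply]
      have hmono : ∀ a b : LV k, σ'' a ≤ σ'' b ↔ a ≤ b := fun a b => σ'.le_iff_le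
      have hpos : ∀ a : LV k, (σ'' a : ℕ) < t ↔ (σ (cop j a) : ℕ) < p := by
        intro a
        have h1 : (σ'' a ≤ σ'' w) ↔ ((σ (cop j a) : ℕ) ≤ (σ (cop j w) : ℕ)) :=
          (hmono a w).trans (hle a w)
        rw [Fin.le_def, hσ''w] at h1
        omega
      set w' : LV k := σ''.symm ⟨Fintype.card (LV k) - 1, by omega⟩ with hw'
      have hσ''w' : (σ'' w' : ℕ) = Fintype.card (LV k) - 1 := by rw [hw', Equiv.apply_symm_apply]
      have hww' : (σ (cop j w) : ℕ) < (σ (cop j w') : ℕ) := by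
        have h2 : w < w' := by
          rw [← σ'.lt_iff_lt]
          show σ'' w < σ'' w'
          rw [Fin.lt_def, hσ''w, hσ''w']
          omega
        have h3 : (σ (cop j w) : ℕ) ≤ (σ (cop j w') : ℕ) := (hle w w').mp h2.le
        have h4 : (σ (cop j w) : ℕ) ≠ (σ (cop j w') : ℕ) := fun hc =>
          (ne_of_lt h2) (cop_injective j (σ.injective (Fin.ext hc)))
        omega
      have hpIco1 : 1 ≤ p := by omega
      have hpIco2 : p < Fintype.card (LV (k + 1)) := by
        have := (σ (cop j w')).isLt
        omega
      refine ⟨p, ⟨w, by omega⟩, ⟨w', by omega⟩, ?_⟩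
      intro x y hxy hxcop hycop hxv hyv hcross
      obtain ⟨Mb, hIMbig, hcardbig, hshape⟩ :=
        IsInducedMatching.map_emb (cop_injective j)
          (fun a b => cutGraph_adj_transfer (fun a b => adj_cop_cop.symm) hpos a b) hM'IM
      have hkey : ∀ u : LV (k + 1), (∀ b, u ≠ cop j b) → u ≠ vtx k j →
          ∀ c, u ≠ cop j c ∧ ¬(cutGraph (Lgraph (k + 1)) σ p).Adj u (cop j c) := by
        intro u hu huv c
        refine ⟨hu c, fun hadj => ?_⟩
        rcases adj_cop_iff.mp hadj.1.symm with ⟨b, hb, -⟩ | ⟨-, hb⟩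
        · exact hu b hb
        · exact huv hb
      have hnotin : s(x, y) ∉ Mb := by
        intro hmem
        obtain ⟨a, b, hab⟩ := hshape _ hmem
        rcases Sym2.eq_iff.mp hab with ⟨h1, -⟩ | ⟨h1, -⟩
        · exact hxcop a h1
        · exact hxcop b h1
      have hM2 : IsInducedMatching (cutGraph (Lgraph (k + 1)) σ p) (insert s(x, y) Mb) := by
        constructor
        · intro e he
          rw [Finset.coe_insert, Set.mem_insert_iff] at he
          rcases he with rfl | he
          · exact (SimpleGraph.mem_edgeSet _).mpr ⟨hxy, Or.inl hcross⟩
          · exact hIMbig.1 he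
        · intro e he f hf hne u hu v hv
          rw [Finset.mem_insert] at he hf
          rcases he with rfl | he <;> rcases hf with rfl | hf
          · exact absurd rfl hne
          · obtain ⟨a, b, rfl⟩ := hshape _ hf
            have hucond : (∀ b', u ≠ cop j b') ∧ u ≠ vtx k j := by
              rcases Sym2.mem_iff.mp hu with rfl | rfl
              exacts [⟨hxcop, hxv⟩, ⟨hycop, hyv⟩]
            rcases Sym2.mem_iff.mp hv with rfl | rfl
            · exact hkey u hucond.1 hucond.2 a
            · exact hkey u hucond.1 hucond.2 b
          · obtain ⟨a, b, rfl⟩ := hshape _ he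
            have hvcond : (∀ b', v ≠ cop j b') ∧ v ≠ vtx k j := by
              rcases Sym2.mem_iff.mp hv with rfl | rfl
              exacts [⟨hxcop, hxv⟩, ⟨hycop, hyv⟩]
            rcases Sym2.mem_iff.mp hu with rfl | rfl
            · have := hkey v hvcond.1 hvcond.2 a
              exact ⟨fun hc => this.1 hc.symm, fun hc => this.2 hc.symm⟩
            · have := hkey v hvcond.1 hvcond.2 b
              exact ⟨fun hc => this.1 hc.symm, fun hc => this.2 hc.symm⟩
          · exact hIMbig.2 e he f hf hne u hu v hv
      have hc1 := card_le_mim hM2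
      rw [Finset.card_insert_of_notMem hnotin, hcardbig] at hc1
      have hc2 : mim (cutGraph (Lgraph (k + 1)) σ p) ≤ k :=
        le_trans (mim_le_mw hpIco1 hpIco2) hcon
      omega
    choose p hp1 hp2 hp3 using main
    have hvtxiff : ∀ (j j' : Fin 3), j' ≠ j →
        (((σ (vtx k j') : ℕ) < p j) ↔ ((σ (top k) : ℕ) < p j)) := by
      intro j j' hj'
      have hadj : (Lgraph (k + 1)).Adj (top k) (vtx k j') := adj_top_iff.mpr ⟨j', rfl⟩
      have h1 := hp3 j _ _ hadj (fun b => top_ne_cop) (fun b => vtx_ne_cop)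
        top_ne_vtx (fun hc => hj' (vtx_eq_vtx hc))
      have h2 := hp3 j _ _ hadj.symm (fun b => vtx_ne_cop) (fun b => top_ne_cop)
        (fun hc => hj' (vtx_eq_vtx hc)) top_ne_vtx
      omega
    have hcopiff : ∀ (j j' : Fin 3), j' ≠ j → ∀ a : LV k,
        (((σ (cop j' a) : ℕ) < p j) ↔ ((σ (top k) : ℕ) < p j)) := by
      intro j j' hj' a
      have hne1 : ∀ b : LV k, vtx k j' ≠ cop j b := fun b => vtx_ne_cop
      have hne2 : ∀ (c b : LV k), cop j' c ≠ cop j b := fun c b => cop_ne_cop hj'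
      have hne3 : ∀ c : LV k, cop j' c ≠ vtx k j := fun c hc => vtx_ne_cop hc.symm
      have hne4 : vtx k j' ≠ vtx k j := fun hc => hj' (vtx_eq_vtx hc)
      have hroot : ((σ (cop j' (Lroot k)) : ℕ) < p j) ↔ ((σ (vtx k j') : ℕ) < p j) := by
        have hadj : (Lgraph (k + 1)).Adj (vtx k j') (cop j' (Lroot k)) :=
          adj_vtx_iff.mpr (Or.inr rfl)
        have h1 := hp3 j _ _ hadj hne1 (hne2 _) hne4 (hne3 _)
        have h2 := hp3 j _ _ hadj.symm (hne2 _) hne1 (hne3 _) hne4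
        omega
      have aux : ∀ (c d : LV k) (wk : (Lgraph k).Walk c d),
          (((σ (cop j' c) : ℕ) < p j) ↔ ((σ (cop j' d) : ℕ) < p j)) := by
        intro c d wk
        induction wk with
        | nil => exact Iff.rfl
        | cons hadj wtail ih =>
          refine Iff.trans ?_ ih
          have h1 := hp3 j _ _ (adj_cop_cop.mpr hadj) (hne2 _) (hne2 _) (hne3 _) (hne3 _)
          have h2 := hp3 j _ _ (adj_cop_cop.mpr hadj).symm (hne2 _) (hne2 _) (hne3 _) (hne3 _)
          omega
      obtain ⟨wk⟩ := reachable_root k a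
      exact ((aux (Lroot k) a wk).symm.trans hroot).trans (hvtxiff j j' hj')
    obtain ⟨j1, j2, hj12, hiff⟩ : ∃ j1 j2 : Fin 3, j1 ≠ j2 ∧
        (((σ (top k) : ℕ) < p j1) ↔ ((σ (top k) : ℕ) < p j2)) := by
      by_cases h01 : ((σ (top k) : ℕ) < p 0) ↔ ((σ (top k) : ℕ) < p 1)
      · exact ⟨0, 1, by decide, h01⟩
      by_cases h02 : ((σ (top k) : ℕ) < p 0) ↔ ((σ (top k) : ℕ) < p 2)
      · exact ⟨0, 2, by decide, h02⟩
      exact ⟨1, 2, by decide, by tauto⟩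
    obtain ⟨a1, ha1⟩ := hp1 j1
    obtain ⟨b1, hb1⟩ := hp2 j1
    obtain ⟨a2, ha2⟩ := hp1 j2
    obtain ⟨b2, hb2⟩ := hp2 j2
    have hx1 := hcopiff j1 j2 (Ne.symm hj12)
    have hx2 := hcopiff j2 j1 hj12
    by_cases htop : (σ (top k) : ℕ) < p j1
    · have htop2 : (σ (top k) : ℕ) < p j2 := hiff.mp htop
      have h1 : (σ (cop j2 b2) : ℕ) < p j1 := (hx1 b2).mpr htop
      have h2 : (σ (cop j1 b1) : ℕ) < p j2 := (hx2 b1).mpr htop2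
      omega
    · have htop2 : ¬(σ (top k) : ℕ) < p j2 := fun hh => htop (hiff.mpr hh)
      have h1 : ¬(σ (cop j2 a2) : ℕ) < p j1 := fun hh => htop ((hx1 a2).mp hh)
      have h2 : ¬(σ (cop j1 a1) : ℕ) < p j2 := fun hh => htop2 ((hx2 a1).mp hh)
      omega

end LB

/-- For every `k ≥ 0`, the tree `L k` has linear MIM-width exactly `k`. -/
theorem lmw_Lgraph (k : ℕ) : lmw (Lgraph k) = k := by
  obtain ⟨σ, -, hσ⟩ := ub k
  exact le_antisymm (lmw_le hσ) (le_lmw (lb k))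

end LMW
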